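/- Let f : ℝ → ℝ be f(x) = -k x^(n/m) with k > 0 and m, n odd coprime positive integers, n < m, where x^(n/m) is the sign-preserving odd root power. Then f is continuous, f(0) = 0, x·f(x) < 0 for x ≠ 0, and every solution of ẋ = f(x) with x(0) = x₀ reaches 0 in time at most (m/(k(m-n))) |x₀|^((m-n)/m) and remains at 0 thereafter. -/

import Mathlib

/-- Sign-preserving odd real-root power: `oddPow x q = sign x * |x| ^ q`. -/
noncomputable def oddPow (x q : ℝ) : ℝ := Real.sign x * |x| ^ q

open Real Set

lemma oddPow_of_pos {x : ℝ} (hx : 0 < x) (q : ℝ) : oddPow x q = x ^ q := by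
  simp [oddPow, Real.sign_of_pos hx, abs_of_pos hx]

lemma oddPow_neg (x q : ℝ) : oddPow (-x) q = -oddPow x q := by
  simp [oddPow, Real.sign_neg, neg_mul]

lemma oddPow_zero (q : ℝ) : oddPow 0 q = 0 := by simp [oddPow]

lemma continuous_oddPow {q : ℝ} (hq : 0 < q) : Continuous (fun x => oddPow x q) := by
  rw [continuous_iff_continuousAt]
  intro x
  rcases lt_trichotomy x 0 with h | h | h
  · have h1 : ContinuousAt (fun y : ℝ => -((-y) ^ q)) x :=
      ((Real.continuousAt_rpow_const _ _ (Or.inr hq.le)).comp continuousAt_id.neg).neg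
    refine h1.congr ?_
    filter_upwards [eventually_lt_nhds h] with y hy
    simp [oddPow, Real.sign_of_neg hy, abs_of_neg hy]
  · subst h
    have habs : ContinuousAt (fun y : ℝ => |y| ^ q) 0 :=
      (Real.continuousAt_rpow_const _ _ (Or.inr hq.le)).comp continuous_abs.continuousAt
    have hlim : Filter.Tendsto (fun y : ℝ => |y| ^ q) (nhds 0) (nhds 0) := by
      simpa [Real.zero_rpow hq.ne'] using habs.tendsto
    rw [ContinuousAt, oddPow_zero]
    apply squeeze_zero_norm _ hlim
    intro y
    have hs : |Real.sign y| ≤ 1 := by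
      rcases lt_trichotomy y 0 with h | h | h
      · simp [Real.sign_of_neg h]
      · simp [h, Real.sign_zero]
      · simp [Real.sign_of_pos h]
    calc ‖oddPow y q‖ = |Real.sign y| * abs (|y| ^ q) := by simp [oddPow, abs_mul]
      _ ≤ 1 * abs (|y| ^ q) := by gcongr
      _ = |y| ^ q := by rw [one_mul, abs_of_nonneg (Real.rpow_nonneg (abs_nonneg y) q)]
  · have h1 : ContinuousAt (fun y : ℝ => y ^ q) x :=
      Real.continuousAt_rpow_const _ _ (Or.inr hq.le)
    refine h1.congr ?_
    filter_upwards [eventually_gt_nhds h] with y hy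
    exact (oddPow_of_pos hy q).symm

section ODE

variable {k q : ℝ}

lemma f_neg_of_pos (hk : 0 < k) {y : ℝ} (hy : 0 < y) : -k * oddPow y q < 0 := by
  rw [oddPow_of_pos hy]
  have := Real.rpow_pos_of_pos hy q
  nlinarith

lemma stay_nonpos (hk : 0 < k) (x : ℝ → ℝ) (hx : Differentiable ℝ x)
    (hode : ∀ t, 0 ≤ t → deriv x t = -k * oddPow (x t) q)
    {t₀ t₁ : ℝ} (h0 : 0 ≤ t₀) (h01 : t₀ < t₁) (hz : x t₀ = 0) : ¬ 0 < x t₁ := by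
  intro hpos
  set S := Icc t₀ t₁ ∩ {t | x t = 0} with hS
  have hSne : S.Nonempty := ⟨t₀, ⟨le_refl _, h01.le⟩, hz⟩
  have hSbdd : BddAbove S := ⟨t₁, fun t ht => ht.1.2⟩
  have hclosed : IsClosed S :=
    isClosed_Icc.inter (isClosed_eq hx.continuous continuous_const)
  set s := sSup S with hs
  have hsmem : s ∈ S := hclosed.csSup_mem hSne hSbdd
  have hxs : x s = 0 := hsmem.2
  have hst : s < t₁ := lt_of_le_of_ne hsmem.1.2 (by
    intro h; rw [h] at hxs; exact absurd hxs (ne_of_gt hpos))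
  have hne : ∀ t, s < t → t ≤ t₁ → x t ≠ 0 := by
    intro t h1 h2 h3
    have : t ∈ S := ⟨⟨le_trans hsmem.1.1 h1.le, h2⟩, h3⟩
    exact absurd (le_csSup hSbdd this) (not_le.mpr h1)
  have hxpos : ∀ t, s < t → t ≤ t₁ → 0 < x t := by
    intro t h1 h2
    rcases lt_trichotomy 0 (x t) with h | h | h
    · exact h
    · exact absurd h.symm (hne t h1 h2)
    · have h4 : t ≤ t₁ := h2
      have : (0 : ℝ) ∈ Icc (x t) (x t₁) := ⟨h.le, hpos.le⟩
      obtain ⟨c, hc1, hc2⟩ := intermediate_value_Icc h4 (hx.continuous.continuousOn) this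
      exact absurd hc2 (hne c (lt_of_lt_of_le h1 hc1.1) hc1.2)
  obtain ⟨c, hc, hceq⟩ := exists_hasDerivAt_eq_slope x (deriv x) hst
    hx.continuous.continuousOn (fun t _ => (hx t).hasDerivAt)
  have hcpos : 0 < x c := hxpos c hc.1 hc.2.le
  have h0c : 0 ≤ c := le_trans (le_trans h0 hsmem.1.1) hc.1.le
  have hlt : deriv x c < 0 := by rw [hode c h0c]; exact f_neg_of_pos hk hcpos
  rw [hceq, hxs, sub_zero] at hlt
  have := div_pos hpos (sub_pos.mpr hst)
  linarith

lemma reach_zero (hk : 0 < k) (hq : 0 < q) (hq1 : q < 1) (x : ℝ → ℝ)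
    (hx : Differentiable ℝ x)
    (hode : ∀ t, 0 ≤ t → deriv x t = -k * oddPow (x t) q)
    (hpos : 0 < x 0) :
    ∃ s ∈ Icc (0:ℝ) ((x 0) ^ (1-q) / (k * (1-q))), x s = 0 := by
  set α := 1 - q with hα
  have hαpos : 0 < α := by simp [hα]; linarith
  set T := (x 0) ^ α / (k * α) with hT
  have hTpos : 0 < T := div_pos (Real.rpow_pos_of_pos hpos α) (by positivity)
  by_contra hcon
  push_neg at hcon
  have hxpos : ∀ t ∈ Icc (0:ℝ) T, 0 < x t := by
    intro t ht
    rcases lt_trichotomy 0 (x t) with h | h | h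
    · exact h
    · exact absurd h.symm (hcon t ht)
    · have : (0 : ℝ) ∈ Icc (x t) (x 0) := ⟨h.le, hpos.le⟩
      obtain ⟨c, hc1, hc2⟩ := intermediate_value_Icc' ht.1 (hx.continuous.continuousOn) this
      exact absurd hc2 (hcon c ⟨hc1.1, le_trans hc1.2 ht.2⟩)
  set y : ℝ → ℝ := fun t => (x t) ^ α with hy
  have hyd : ∀ t ∈ Ioo (0:ℝ) T, HasDerivAt y (-(k * α)) t := by
    intro t ht
    have hxt : 0 < x t := hxpos t ⟨ht.1.le, ht.2.le⟩
    have h1 : HasDerivAt x (-k * oddPow (x t) q) t := by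
      rw [← hode t ht.1.le]; exact (hx t).hasDerivAt
    have h2 : HasDerivAt (fun u : ℝ => u ^ α) (α * (x t) ^ (α - 1)) (x t) :=
      Real.hasDerivAt_rpow_const (Or.inl hxt.ne')
    have h3 := h2.comp t h1
    refine HasDerivAt.congr_deriv h3 ?_
    symm
    rw [oddPow_of_pos hxt]
    have : (x t) ^ (α - 1) * (x t) ^ q = 1 := by
      rw [← Real.rpow_add hxt]
      norm_num [hα]
    calc -(k * α) = α * ((x t) ^ (α - 1) * (x t) ^ q) * -k := by rw [this]; ring
      _ = α * (x t) ^ (α - 1) * (-k * (x t) ^ q) := by ring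
  have hycont : ContinuousOn y (Icc 0 T) := by
    intro t ht
    exact ((Real.continuousAt_rpow_const _ _ (Or.inl (hxpos t ht).ne')).comp
      (hx.continuous.continuousAt)).continuousWithinAt
  obtain ⟨c, hc, hceq⟩ := exists_hasDerivAt_eq_slope y (fun _ => -(k * α)) hTpos
    hycont (fun t ht => hyd t ht)
  have hyT : y T = 0 := by
    have : y T - y 0 = -(k * α) * T := by
      field_simp at hceq
      rw [sub_zero, eq_div_iff hTpos.ne'] at hceq; linarith [hceq]
    have hy0 : y 0 = (x 0) ^ α := rfl
    have : y T = (x 0) ^ α - (k * α) * T := by rw [hy0] at this; linarith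
    rw [this, hT]
    field_simp
    ring
  have : 0 < y T := Real.rpow_pos_of_pos (hxpos T ⟨hTpos.le, le_refl _⟩) α
  linarith

end ODE

theorem fractional_power_finite_time_stability
    (k : ℝ) (m n : ℤ) (hk : 0 < k)
    (hmodd : Odd m) (hnodd : Odd n) (hcop : IsCoprime m n)
    (hn : 0 < n) (hnm : n < m) :
    let f : ℝ → ℝ := fun x => -k * oddPow x ((n : ℝ) / (m : ℝ))
    Continuous f ∧ f 0 = 0 ∧ (∀ x : ℝ, x ≠ 0 → x * f x < 0) ∧
    (∀ (x : ℝ → ℝ) (x₀ : ℝ), Differentiable ℝ x →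
      (∀ t : ℝ, 0 ≤ t → deriv x t = f (x t)) → x 0 = x₀ →
      ∀ t : ℝ, ((m : ℝ) / (k * ((m : ℝ) - (n : ℝ)))) * |x₀| ^ (((m : ℝ) - (n : ℝ)) / (m : ℝ)) ≤ t →
        x t = 0) := by
  intro f
  have hm : (0 : ℤ) < m := hn.trans hnm
  have hmr : (0 : ℝ) < (m : ℝ) := by exact_mod_cast hm
  have hnr : (0 : ℝ) < (n : ℝ) := by exact_mod_cast hn
  have hnmr : (n : ℝ) < (m : ℝ) := by exact_mod_cast hnm
  set q : ℝ := (n : ℝ) / (m : ℝ) with hqdef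
  have hq : 0 < q := div_pos hnr hmr
  have hq1 : q < 1 := (div_lt_one hmr).mpr hnmr
  refine ⟨continuous_const.mul (continuous_oddPow hq), by simp [f, oddPow_zero], ?_, ?_⟩
  · intro x hx
    rcases lt_trichotomy x 0 with h | h | h
    · have h1 : 0 < (-x) ^ ((n:ℝ)/(m:ℝ)) := Real.rpow_pos_of_pos (by linarith) _
      simp only [f, oddPow, Real.sign_of_neg h, abs_of_neg h]
      have := mul_neg_of_neg_of_pos h (mul_pos hk h1)
      nlinarith [this]
    · exact absurd h hx
    · have h1 : 0 < x ^ ((n:ℝ)/(m:ℝ)) := Real.rpow_pos_of_pos h _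
      simp only [f, oddPow_of_pos h]
      have := mul_pos (mul_pos h hk) h1
      nlinarith [this]
  · intro x x₀ hdiff hode hx0 t ht
    set α : ℝ := 1 - q with hα
    have hαpos : 0 < α := by simp [hα]; linarith
    have hαeq : ((m : ℝ) - (n : ℝ)) / (m : ℝ) = α := by
      rw [hα, hqdef]; field_simp
    have hTeq : ((m : ℝ) / (k * ((m : ℝ) - (n : ℝ)))) * |x₀| ^ (((m : ℝ) - (n : ℝ)) / (m : ℝ))
        = |x₀| ^ α / (k * α) := by
      rw [hαeq, hα, hqdef]
      field_simp
    rw [hTeq] at ht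
    -- zero propagation
    have hode' : ∀ s, 0 ≤ s → deriv x s = -k * oddPow (x s) q := fun s hs => hode s hs
    have hodeN : ∀ s, 0 ≤ s → deriv (fun u => -x u) s = -k * oddPow ((fun u => -x u) s) q := by
      intro s hs
      have : deriv (fun u => -x u) s = -deriv x s := by
        simp [deriv.neg]
      rw [this, hode' s hs, oddPow_neg]
      ring
    have hdiffN : Differentiable ℝ (fun u => -x u) := hdiff.neg
    have zero_after : ∀ t₀ t₁ : ℝ, 0 ≤ t₀ → t₀ < t₁ → x t₀ = 0 → x t₁ = 0 := by
      intro t₀ t₁ h0 h01 hz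
      have h1 := stay_nonpos hk x hdiff hode' h0 h01 hz
      have h2 := stay_nonpos hk (fun u => -x u) hdiffN hodeN h0 h01 (by simp [hz])
      simp only [neg_pos] at h2
      push_neg at h1 h2
      linarith
    have htnn : 0 ≤ |x₀| ^ α / (k * α) := by positivity
    rcases lt_trichotomy x₀ 0 with h | h | h
    · -- negative initial condition: apply reach to -x
      obtain ⟨s, hs, hxs⟩ := reach_zero hk hq hq1 (fun u => -x u) hdiffN hodeN
        (by simp [hx0]; linarith)
      have hxs0 : x s = 0 := by simpa using hxs
      have hsle : s ≤ |x₀| ^ α / (k * α) := by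
        have : (-x 0) ^ (1 - q) = |x₀| ^ α := by rw [hx0, ← hα, abs_of_neg h]
        rw [← this]
        exact hs.2
      rcases eq_or_lt_of_le (hsle.trans ht) with heq | hlt
      · rw [← heq]; exact hxs0
      · exact zero_after s t hs.1 hlt hxs0
    · -- zero initial condition
      have hT0 : |x₀| ^ α / (k * α) = 0 := by
        rw [h]; simp [Real.zero_rpow hαpos.ne']
      rw [hT0] at ht
      rcases eq_or_lt_of_le ht with heq | hlt
      · rw [← heq, hx0, h]
      · exact zero_after 0 t le_rfl hlt (by rw [hx0, h])
    · obtain ⟨s, hs, hxs⟩ := reach_zero hk hq hq1 x hdiff hode' (by rw [hx0]; exact h)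
      have hsle : s ≤ |x₀| ^ α / (k * α) := by
        have : (x 0) ^ (1 - q) = |x₀| ^ α := by rw [hx0, ← hα, abs_of_pos h]
        rw [← this]
        exact hs.2
      rcases eq_or_lt_of_le (hsle.trans ht) with heq | hlt
      · rw [← heq]; exact hxs
      · exact zero_after s t hs.1 hlt hxs
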